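/- Let μ₁, μ₂ ∈ ℂ and let z₁ and z₂ be independent complex random variables such that, for i = 1, 2, Re(z_i) and Im(z_i) are independent real Gaussian random variables with means Re(μ_i) and Im(μ_i) respectively and common variance 1/2. Then E[ z₁ · conj(csgn(z₂)) ] = μ₁ · ( Φ(Re μ₂) − i·Φ(Im μ₂) ). -/

import Mathlib

open MeasureTheory ProbabilityTheory
open scoped NNReal

/-- The error function `Φ(x) = (2/√π) ∫₀ˣ exp(−t²) dt`. -/
noncomputable def erf (x : ℝ) : ℝ :=
  2 / Real.sqrt Real.pi * ∫ t in (0 : ℝ)..x, Real.exp (-t ^ 2)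

/-- The complex sign map `csgn(z) = sgn(Re z) + i sgn(Im z)`. -/
noncomputable def csgn (z : ℂ) : ℂ :=
  (Real.sign z.re : ℂ) + (Real.sign z.im : ℂ) * Complex.I

/-- The law of a complex random variable whose real and imaginary parts are
independent real Gaussians with means `Re μ`, `Im μ` and common variance `1/2`. -/
noncomputable def complexGaussian (μ : ℂ) : Measure ℂ :=
  ((gaussianReal μ.re (1 / 2)).prod (gaussianReal μ.im (1 / 2))).map
    fun p => (p.1 : ℂ) + (p.2 : ℂ) * Complex.I

open Real Set
open scoped ENNReal

-- basic facts
lemma measurable_realSign : Measurable Real.sign := by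
  have : Real.sign = fun r : ℝ => ite (r < 0) (-1 : ℝ) (ite (0 < r) 1 0) := rfl
  rw [this]
  exact Measurable.ite (measurableSet_lt measurable_id measurable_const) measurable_const
    (Measurable.ite (measurableSet_lt measurable_const measurable_id) measurable_const
      measurable_const)

lemma abs_realSign_le (r : ℝ) : ‖Real.sign r‖ ≤ 1 := by
  rcases Real.sign_apply_eq r with h | h | h <;> simp [h]

-- integrability of shifted gaussian
lemma integrable_expShift (m : ℝ) : Integrable (fun x : ℝ => Real.exp (-(x - m) ^ 2)) := by
  have h : Integrable (fun x : ℝ => Real.exp (-1 * x ^ 2)) := integrable_exp_neg_mul_sq one_pos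
  have h' : Integrable (fun x : ℝ => Real.exp (-x ^ 2)) := by simpa using h
  exact h'.comp_sub_right m

lemma integral_expShift (m : ℝ) : ∫ x : ℝ, Real.exp (-(x - m) ^ 2) = Real.sqrt Real.pi := by
  rw [integral_sub_right_eq_self (fun t : ℝ => Real.exp (-t ^ 2)) m]
  have := integral_gaussian 1
  simpa using this

lemma integrable_exp_sq : Integrable (fun x : ℝ => Real.exp (-x ^ 2)) := by
  simpa using integrable_expShift 0

lemma integral_Iic_exp_sq : ∫ x in Iic (0:ℝ), Real.exp (-x ^ 2) = Real.sqrt Real.pi / 2 := by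
  have htot : (∫ x in Iic (0:ℝ), Real.exp (-x ^ 2)) + ∫ x in Ioi (0:ℝ), Real.exp (-x ^ 2)
      = Real.sqrt Real.pi := by
    rw [intervalIntegral.integral_Iic_add_Ioi integrable_exp_sq.integrableOn
      integrable_exp_sq.integrableOn]
    have := integral_expShift 0; simpa using this
  have hIoi : ∫ x in Ioi (0:ℝ), Real.exp (-x ^ 2) = Real.sqrt Real.pi / 2 := by
    have := integral_gaussian_Ioi 1
    simpa using this
  linarith

lemma integral_Iic_expShift (m : ℝ) :
    ∫ x in Iic (0:ℝ), Real.exp (-(x - m) ^ 2)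
      = Real.sqrt Real.pi / 2 - ∫ t in (0:ℝ)..m, Real.exp (-t ^ 2) := by
  have hshift : ∫ x in Iic (0:ℝ), Real.exp (-(x - m) ^ 2)
      = ∫ t in Iic (-m), Real.exp (-t ^ 2) := by
    have hmp : MeasurePreserving (fun x : ℝ => x + -m) volume volume :=
      measurePreserving_add_right volume (-m)
    have := hmp.setIntegral_preimage_emb
      (MeasurableEquiv.addRight (-m)).measurableEmbedding
      (fun t : ℝ => Real.exp (-t ^ 2)) (Iic (-m))
    have hpre : (fun x : ℝ => x + -m) ⁻¹' Iic (-m) = Iic (0:ℝ) := by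
      ext x; simp [Set.mem_Iic]
    rw [hpre] at this
    simp only [← sub_eq_add_neg] at this
    exact this
  rw [hshift]
  have hsub := intervalIntegral.integral_Iic_sub_Iic
    (f := fun t : ℝ => Real.exp (-t ^ 2)) (μ := volume) (a := (0:ℝ)) (b := -m)
    integrable_exp_sq.integrableOn integrable_exp_sq.integrableOn
  have heven : ∫ t in (0:ℝ)..(-m), Real.exp (-t ^ 2)
      = - ∫ t in (0:ℝ)..m, Real.exp (-t ^ 2) := by
    rw [intervalIntegral.integral_symm]
    congr 1
    have := intervalIntegral.integral_comp_neg (a := (0:ℝ)) (b := m)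
      (fun t : ℝ => Real.exp (-t ^ 2))
    simp only [neg_zero] at this
    rw [← this]
    congr 1; ext x; rw [neg_sq]
  rw [heven] at hsub
  rw [integral_Iic_exp_sq] at hsub
  linarith

lemma ae_ne_zero : ∀ᵐ x : ℝ ∂(volume : Measure ℝ), x ≠ 0 := by
  rw [ae_iff]
  simpa using volume_singleton (a := (0:ℝ))

lemma integrable_sign_mul_expShift (m : ℝ) :
    Integrable (fun x : ℝ => Real.sign x * Real.exp (-(x - m) ^ 2)) :=
  (integrable_expShift m).bdd_mul measurable_realSign.aestronglyMeasurable
    (Filter.Eventually.of_forall abs_realSign_le)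

lemma integral_sign_mul_expShift (m : ℝ) :
    ∫ x : ℝ, Real.sign x * Real.exp (-(x - m) ^ 2)
      = 2 * ∫ t in (0:ℝ)..m, Real.exp (-t ^ 2) := by
  have hsplit := intervalIntegral.integral_Iio_add_Ici (μ := volume) (b := (0:ℝ))
    (f := fun x : ℝ => Real.sign x * Real.exp (-(x - m) ^ 2))
    (integrable_sign_mul_expShift m).integrableOn (integrable_sign_mul_expShift m).integrableOn
  have hIio : ∫ x in Iio (0:ℝ), Real.sign x * Real.exp (-(x - m) ^ 2)
      = - ∫ x in Iic (0:ℝ), Real.exp (-(x - m) ^ 2) := by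
    rw [← integral_neg, integral_Iic_eq_integral_Iio]
    refine setIntegral_congr_fun measurableSet_Iio fun x hx => ?_
    rw [Real.sign_of_neg hx]
    ring
  have hIci : ∫ x in Ici (0:ℝ), Real.sign x * Real.exp (-(x - m) ^ 2)
      = Real.sqrt Real.pi - ∫ x in Iic (0:ℝ), Real.exp (-(x - m) ^ 2) := by
    have h1 : ∫ x in Ici (0:ℝ), Real.sign x * Real.exp (-(x - m) ^ 2)
        = ∫ x in Ici (0:ℝ), Real.exp (-(x - m) ^ 2) := by
      refine setIntegral_congr_ae measurableSet_Ici ?_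
      filter_upwards [ae_ne_zero] with x hx hmem
      rw [Real.sign_of_pos (lt_of_le_of_ne hmem (Ne.symm hx))]
      ring
    have h2 : (∫ x in Iic (0:ℝ), Real.exp (-(x - m) ^ 2))
        + ∫ x in Ioi (0:ℝ), Real.exp (-(x - m) ^ 2) = Real.sqrt Real.pi := by
      rw [intervalIntegral.integral_Iic_add_Ioi (integrable_expShift m).integrableOn
        (integrable_expShift m).integrableOn]
      exact integral_expShift m
    rw [h1, integral_Ici_eq_integral_Ioi]
    linarith
  rw [← hsplit, hIio, hIci, integral_Iic_expShift m]
  ring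

lemma gaussianPDFReal_half (m x : ℝ) :
    gaussianPDFReal m (1/2) x = (Real.sqrt Real.pi)⁻¹ * Real.exp (-(x - m) ^ 2) := by
  rw [gaussianPDFReal]
  norm_num
  rw [mul_comm (Real.sqrt 2), mul_assoc, inv_mul_cancel₀ (by positivity), mul_one]

lemma integral_gaussianReal_half {E : Type*} [NormedAddCommGroup E] [NormedSpace ℝ E]
    (m : ℝ) (f : ℝ → E) :
    ∫ x, f x ∂(gaussianReal m (1/2))
      = (Real.sqrt Real.pi)⁻¹ • ∫ x : ℝ, Real.exp (-(x - m) ^ 2) • f x := by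
  rw [gaussianReal_of_var_ne_zero m (by norm_num)]
  have hd : gaussianPDF m (1/2)
      = fun x => ((Real.toNNReal (gaussianPDFReal m (1/2) x) : ℝ≥0) : ℝ≥0∞) := rfl
  rw [hd, integral_withDensity_eq_integral_smul
    ((measurable_gaussianPDFReal m (1/2)).real_toNNReal) f]
  rw [← integral_smul]
  congr 1
  ext x
  rw [NNReal.smul_def, Real.coe_toNNReal _ (gaussianPDFReal_nonneg m (1/2) x),
    gaussianPDFReal_half, mul_smul]

lemma integral_sign_gaussianReal (m : ℝ) :
    ∫ x, Real.sign x ∂(gaussianReal m (1/2)) = erf m := by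
  rw [integral_gaussianReal_half m Real.sign]
  have : ∫ x : ℝ, Real.exp (-(x - m) ^ 2) • Real.sign x
      = 2 * ∫ t in (0:ℝ)..m, Real.exp (-t ^ 2) := by
    rw [← integral_sign_mul_expShift m]
    congr 1; ext x; rw [smul_eq_mul]; ring
  rw [this, erf, smul_eq_mul]
  rw [div_eq_mul_inv, mul_comm (2 : ℝ)]
  ring

lemma integral_id_gaussianReal_half (m : ℝ) :
    ∫ x, x ∂(gaussianReal m (1/2)) = m := by
  rw [integral_gaussianReal_half m (fun x => x)]
  have h1 : ∫ x : ℝ, Real.exp (-(x - m) ^ 2) • x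
      = ∫ t : ℝ, Real.exp (-t ^ 2) * (t + m) := by
    rw [← integral_sub_right_eq_self (fun t : ℝ => Real.exp (-t ^ 2) * (t + m)) m]
    congr 1; ext x; rw [smul_eq_mul]; ring_nf
  have hodd : ∫ t : ℝ, Real.exp (-t ^ 2) * t = 0 := by
    have hneg := MeasureTheory.integral_neg_eq_self
      (fun t : ℝ => Real.exp (-t ^ 2) * t) volume
    have : ∫ t : ℝ, Real.exp (-(-t) ^ 2) * (-t) = - ∫ t : ℝ, Real.exp (-t ^ 2) * t := by
      rw [← integral_neg]; congr 1; ext t; rw [neg_sq]; ring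
    rw [this] at hneg
    linarith
  have hmul : Integrable (fun t : ℝ => Real.exp (-t ^ 2) * t) := by
    have := integrable_mul_exp_neg_mul_sq (b := 1) one_pos
    have h2 : Integrable (fun t : ℝ => t * Real.exp (-t ^ 2)) := by simpa using this
    simpa [mul_comm] using h2
  have h2 : ∫ t : ℝ, Real.exp (-t ^ 2) * (t + m)
      = (∫ t : ℝ, Real.exp (-t ^ 2) * t) + m * ∫ t : ℝ, Real.exp (-t ^ 2) := by
    rw [← integral_const_mul, ← integral_add hmul (integrable_exp_sq.const_mul m)]
    congr 1; ext t; ring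
  have h3 : ∫ t : ℝ, Real.exp (-t ^ 2) = Real.sqrt Real.pi := by
    simpa using integral_expShift 0
  rw [h1, h2, hodd, h3, zero_add, smul_eq_mul]
  have : Real.sqrt Real.pi ≠ 0 := by positivity
  field_simp

lemma integrable_exp_sq_mul : Integrable (fun t : ℝ => Real.exp (-t ^ 2) * t) := by
  have := integrable_mul_exp_neg_mul_sq (b := 1) one_pos
  have h2 : Integrable (fun t : ℝ => t * Real.exp (-t ^ 2)) := by simpa using this
  simpa [mul_comm] using h2

lemma integrable_id_gauss (m : ℝ) : Integrable (fun x : ℝ => x) (gaussianReal m (1/2)) := by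
  rw [gaussianReal_of_var_ne_zero m (by norm_num)]
  rw [show gaussianPDF m (1/2)
      = fun x => ((Real.toNNReal (gaussianPDFReal m (1/2) x) : ℝ≥0) : ℝ≥0∞) from rfl]
  rw [integrable_withDensity_iff_integrable_smul
    ((measurable_gaussianPDFReal m (1/2)).real_toNNReal)]
  have heq : (fun x : ℝ => (Real.toNNReal (gaussianPDFReal m (1/2) x)) • x)
      = fun x => (Real.sqrt Real.pi)⁻¹ * (Real.exp (-(x - m) ^ 2) * x) := by
    ext x
    rw [NNReal.smul_def, Real.coe_toNNReal _ (gaussianPDFReal_nonneg m (1/2) x),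
      gaussianPDFReal_half, smul_eq_mul]
    ring
  rw [heq]
  refine Integrable.const_mul ?_ _
  have h : Integrable (fun t : ℝ => Real.exp (-t ^ 2) * (t + m)) := by
    have := integrable_exp_sq_mul.add (integrable_exp_sq.const_mul m)
    refine this.congr (Filter.Eventually.of_forall fun t => ?_)
    simp only [Pi.add_apply]
    ring
  have h' := h.comp_sub_right m
  refine h'.congr (Filter.Eventually.of_forall fun x => ?_)
  ring_nf

lemma integral_coe_complex (μ : Measure ℝ) :
    ∫ x : ℝ, (x : ℂ) ∂μ = ((∫ x, x ∂μ : ℝ) : ℂ) :=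
  integral_ofReal

lemma integral_sign_coe_complex (μ : Measure ℝ) :
    ∫ x : ℝ, (Real.sign x : ℂ) ∂μ = ((∫ x, Real.sign x ∂μ : ℝ) : ℂ) :=
  integral_ofReal

lemma measurable_T : Measurable (fun p : ℝ × ℝ => (p.1 : ℂ) + (p.2 : ℂ) * Complex.I) :=
  (Complex.measurable_ofReal.comp measurable_fst).add
    ((Complex.measurable_ofReal.comp measurable_snd).mul_const Complex.I)

lemma measurable_csgn : Measurable csgn :=
  ((Complex.measurable_ofReal.comp (measurable_realSign.comp Complex.measurable_re)).add
    ((Complex.measurable_ofReal.comp (measurable_realSign.comp Complex.measurable_im)).mul_const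
      Complex.I))

lemma norm_csgn_le (z : ℂ) : ‖csgn z‖ ≤ 2 := by
  calc ‖csgn z‖ ≤ ‖(Real.sign z.re : ℂ)‖ + ‖(Real.sign z.im : ℂ) * Complex.I‖ := norm_add_le _ _
  _ ≤ 1 + 1 := by
      refine add_le_add ?_ ?_
      · simpa using abs_realSign_le z.re
      · rw [norm_mul, Complex.norm_I, mul_one]
        simpa using abs_realSign_le z.im
  _ = 2 := by norm_num

lemma integral_id_complexGaussian (μ : ℂ) : ∫ z, z ∂(complexGaussian μ) = μ := by
  rw [complexGaussian,
    integral_map measurable_T.aemeasurable (f := fun z : ℂ => z) aestronglyMeasurable_id]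
  set P := (gaussianReal μ.re (1/2)).prod (gaussianReal μ.im (1/2)) with hP
  have h1 : Integrable (fun p : ℝ × ℝ => (p.1 : ℂ)) P := by
    have := ((integrable_id_gauss μ.re).ofReal (𝕜 := ℂ)).mul_prod
      (integrable_const (1 : ℂ)) (ν := gaussianReal μ.im (1/2))
    refine this.congr (Filter.Eventually.of_forall fun p => ?_)
    simp
  have h2 : Integrable (fun p : ℝ × ℝ => (p.2 : ℂ) * Complex.I) P := by
    have := (integrable_const (1 : ℂ)).mul_prod
      (((integrable_id_gauss μ.im).ofReal (𝕜 := ℂ)).mul_const Complex.I)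
      (μ := gaussianReal μ.re (1/2))
    refine this.congr (Filter.Eventually.of_forall fun p => ?_)
    simp
  rw [integral_add h1 h2]
  have e1 : ∫ p : ℝ × ℝ, (p.1 : ℂ) ∂P = (μ.re : ℂ) := by
    have := integral_prod_mul (μ := gaussianReal μ.re (1/2)) (ν := gaussianReal μ.im (1/2))
      (fun x : ℝ => (x : ℂ)) (fun _ => (1 : ℂ))
    simp only [mul_one] at this
    have hre : ∫ x : ℝ, (x : ℂ) ∂(gaussianReal μ.re (1/2)) = (μ.re : ℂ) := by
      rw [integral_coe_complex, integral_id_gaussianReal_half]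
    rw [hP, this, integral_const, probReal_univ, one_smul, hre, mul_one]
  have e2 : ∫ p : ℝ × ℝ, (p.2 : ℂ) * Complex.I ∂P = (μ.im : ℂ) * Complex.I := by
    have := integral_prod_mul (μ := gaussianReal μ.re (1/2)) (ν := gaussianReal μ.im (1/2))
      (fun _ => (1 : ℂ)) (fun y : ℝ => (y : ℂ) * Complex.I)
    simp only [one_mul] at this
    have him : ∫ x : ℝ, (x : ℂ) ∂(gaussianReal μ.im (1/2)) = (μ.im : ℂ) := by
      rw [integral_coe_complex, integral_id_gaussianReal_half]
    rw [hP, this, integral_const, probReal_univ, one_smul, one_mul,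
      integral_mul_const, him]
  rw [e1, e2, Complex.re_add_im]

lemma integrable_bounded_prob {α : Type*} [MeasurableSpace α] {μ : Measure α}
    [IsProbabilityMeasure μ] {f : α → ℂ} (hm : AEStronglyMeasurable f μ) (C : ℝ)
    (h : ∀ x, ‖f x‖ ≤ C) : Integrable f μ :=
  (integrable_const C).mono' hm (Filter.Eventually.of_forall h)

lemma integral_conj_csgn_complexGaussian (μ : ℂ) :
    ∫ z, (starRingEnd ℂ) (csgn z) ∂(complexGaussian μ)
      = (erf μ.re : ℂ) - (erf μ.im : ℂ) * Complex.I := by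
  have hmap : AEStronglyMeasurable (fun z => (starRingEnd ℂ) (csgn z)) (complexGaussian μ) :=
    (Complex.continuous_conj.measurable.comp measurable_csgn).aestronglyMeasurable
  rw [complexGaussian, integral_map measurable_T.aemeasurable (by rwa [complexGaussian] at hmap)]
  set P := (gaussianReal μ.re (1/2)).prod (gaussianReal μ.im (1/2)) with hP
  have hint : (fun p : ℝ × ℝ => (starRingEnd ℂ) (csgn ((p.1 : ℂ) + (p.2 : ℂ) * Complex.I)))
      = fun p : ℝ × ℝ => (Real.sign p.1 : ℂ) - (Real.sign p.2 : ℂ) * Complex.I := by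
    ext p
    simp [csgn, sub_eq_add_neg]
  rw [hint]
  have h1 : Integrable (fun p : ℝ × ℝ => (Real.sign p.1 : ℂ)) P := by
    refine integrable_bounded_prob ?_ 1 ?_
    · exact (Complex.measurable_ofReal.comp
        (measurable_realSign.comp measurable_fst)).aestronglyMeasurable
    · intro p; simpa using abs_realSign_le p.1
  have h2 : Integrable (fun p : ℝ × ℝ => (Real.sign p.2 : ℂ) * Complex.I) P := by
    refine integrable_bounded_prob ?_ 1 ?_
    · exact ((Complex.measurable_ofReal.comp
        (measurable_realSign.comp measurable_snd)).mul_const Complex.I).aestronglyMeasurable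
    · intro p
      rw [norm_mul, Complex.norm_I, mul_one]
      simpa using abs_realSign_le p.2
  rw [integral_sub h1 h2]
  have e1 : ∫ p : ℝ × ℝ, (Real.sign p.1 : ℂ) ∂P = (erf μ.re : ℂ) := by
    have := integral_prod_mul (μ := gaussianReal μ.re (1/2)) (ν := gaussianReal μ.im (1/2))
      (fun x : ℝ => (Real.sign x : ℂ)) (fun _ => (1 : ℂ))
    simp only [mul_one] at this
    rw [hP, this, integral_const, probReal_univ, one_smul,
      integral_sign_coe_complex, integral_sign_gaussianReal, mul_one]
  have e2 : ∫ p : ℝ × ℝ, (Real.sign p.2 : ℂ) * Complex.I ∂P = (erf μ.im : ℂ) * Complex.I := by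
    have := integral_prod_mul (μ := gaussianReal μ.re (1/2)) (ν := gaussianReal μ.im (1/2))
      (fun _ => (1 : ℂ)) (fun y : ℝ => (Real.sign y : ℂ) * Complex.I)
    simp only [one_mul] at this
    rw [hP, this, integral_const, probReal_univ, one_smul, one_mul,
      integral_mul_const, integral_sign_coe_complex, integral_sign_gaussianReal]
  rw [e1, e2]

instance (μ : ℂ) : IsProbabilityMeasure (complexGaussian μ) := by
  rw [complexGaussian]
  exact Measure.isProbabilityMeasure_map measurable_T.aemeasurable

/-- Off-diagonal case of equations (68)–(70): for independent `z₁, z₂` as above,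
`E[z₁ · conj(csgn z₂)] = μ₁ (Φ(Re μ₂) − iΦ(Im μ₂))`. -/
theorem expectation_self_mul_conj_csgn_indep (μ₁ μ₂ : ℂ) :
    ∫ z : ℂ × ℂ, z.1 * (starRingEnd ℂ) (csgn z.2)
        ∂((complexGaussian μ₁).prod (complexGaussian μ₂)) =
      μ₁ * ((erf μ₂.re : ℂ) - (erf μ₂.im : ℂ) * Complex.I) := by
  rw [integral_prod_mul (μ := complexGaussian μ₁) (ν := complexGaussian μ₂)
    (fun z : ℂ => z) (fun z : ℂ => (starRingEnd ℂ) (csgn z))]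
  rw [integral_id_complexGaussian, integral_conj_csgn_complexGaussian]
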